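/- (Concavity of the ELBO in the variational means M.) Fix a p×q real matrix τ with nonnegative entries, a vector λ : Fin p → ℝ with λ_j > 0 for all j, a symmetric positive semidefinite q×q real matrix Ω, and an n×p real matrix R. Then the function mapping an n×q real matrix M to ∑_{i,j} λ_j R_{i j} (M τᵀ)_{i j} − (1/2) ∑_{i,k} (∑_j τ_{j k} λ_j) M_{i k}² − (1/2) ∑_i (M Ω Mᵀ)_{i i} is concave on the space of n×q real matrices. -/

import Mathlib

open Matrix

private lemma convexOn_finset_sum' {ι E : Type*} [AddCommGroup E] [Module ℝ E]
    (s : Finset ι) (f : ι → E → ℝ) (h : ∀ i ∈ s, ConvexOn ℝ Set.univ (f i)) :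
    ConvexOn ℝ Set.univ fun x => ∑ i ∈ s, f i x := by
  classical
  induction s using Finset.induction with
  | empty => simpa using convexOn_const (0 : ℝ) convex_univ
  | @insert a t ha ih =>
    simp only [Finset.sum_insert ha]
    exact (h a (Finset.mem_insert_self a t)).add
      (ih fun i hi => h i (Finset.mem_insert_of_mem hi))

private lemma convexOn_sq_linmap {E : Type*} [AddCommGroup E] [Module ℝ E]
    (ℓ : E →ₗ[ℝ] ℝ) : ConvexOn ℝ Set.univ fun x => (ℓ x) ^ 2 := by
  exact
    (Even.convexOn_pow (even_two)).comp_affineMap ℓ.toAffineMap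

private lemma concaveOn_linmap {E : Type*} [AddCommGroup E] [Module ℝ E]
    (ℓ : E →ₗ[ℝ] ℝ) : ConcaveOn ℝ Set.univ fun x => ℓ x :=
  ⟨convex_univ, fun x _ y _ a b _ _ _ => by simp [map_add, _root_.map_smul]⟩

/-- Concavity of the ELBO in the variational means `M`: with `τ` entrywise
nonnegative, `λ` (here `lam`) positive, `Ω` positive semidefinite and `R` fixed,
the function
`M ↦ ∑_{i,j} λ_j R_{ij} (Mτᵀ)_{ij} − (1/2) ∑_{i,k} (∑_j τ_{jk} λ_j) M_{ik}²
  − (1/2) ∑_i (M Ω Mᵀ)_{ii}`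
is concave on the space of `n×q` real matrices. -/
theorem stmt18 {n p q : ℕ} (τ : Matrix (Fin p) (Fin q) ℝ)
    (hτ : ∀ j k, 0 ≤ τ j k) (lam : Fin p → ℝ) (hlam : ∀ j, 0 < lam j)
    (Ω : Matrix (Fin q) (Fin q) ℝ) (hΩ : Ω.PosSemidef)
    (R : Matrix (Fin n) (Fin p) ℝ) :
    ConcaveOn ℝ Set.univ
      (fun M : Matrix (Fin n) (Fin q) ℝ =>
        (∑ i, ∑ j, lam j * R i j * (M * τᵀ) i j)
          - (1 / 2) * ∑ i, ∑ k, (∑ j, τ j k * lam j) * (M i k) ^ 2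
          - (1 / 2) * ∑ i, (M * Ω * Mᵀ) i i) := by
  classical
  obtain ⟨B, hB⟩ : ∃ B : Matrix (Fin q) (Fin q) ℝ, Ω = Bᴴ * B := by
    open MatrixOrder Matrix.Norms.L2Operator in
    exact CStarAlgebra.nonneg_iff_eq_star_mul_self.mp hΩ.nonneg
  have hBt : Bᴴ = Bᵀ := by ext i j; simp [Matrix.conjTranspose_apply]
  have hB' : Ω = Bᵀ * B := by rw [hB, hBt]
  -- the linear part is concave
  have hL : ConcaveOn ℝ Set.univ
      (fun M : Matrix (Fin n) (Fin q) ℝ =>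
        ∑ i, ∑ j, lam j * R i j * (M * τᵀ) i j) := by
    refine concaveOn_linmap
      ⟨⟨fun M : Matrix (Fin n) (Fin q) ℝ => ∑ i, ∑ j, lam j * R i j * (M * τᵀ) i j, ?_⟩, ?_⟩
    · intro x y
      simp [Matrix.add_mul, mul_add, Finset.sum_add_distrib]
    · intro c x
      simp only [Matrix.smul_mul, Matrix.smul_apply, smul_eq_mul, Finset.mul_sum]
      exact Finset.sum_congr rfl fun i _ => Finset.sum_congr rfl fun j _ => by simp [RingHom.id_apply]; ring
  -- the first quadratic part is convex
  have hg1 : ConvexOn ℝ Set.univ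
      (fun M : Matrix (Fin n) (Fin q) ℝ =>
        (1 / 2) * ∑ i, ∑ k, (∑ j, τ j k * lam j) * (M i k) ^ 2) := by
    have h0 : ConvexOn ℝ Set.univ
        (fun M : Matrix (Fin n) (Fin q) ℝ =>
          ∑ i, ∑ k, (∑ j, τ j k * lam j) * (M i k) ^ 2) := by
      refine convexOn_finset_sum' _ _ fun i _ => ?_
      refine convexOn_finset_sum' _ _ fun k _ => ?_
      have hc : (0 : ℝ) ≤ ∑ j, τ j k * lam j :=
        Finset.sum_nonneg fun j _ => mul_nonneg (hτ j k) (hlam j).le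
      have hsq : ConvexOn ℝ Set.univ
          (fun M : Matrix (Fin n) (Fin q) ℝ => (M i k) ^ 2) :=
        convexOn_sq_linmap ⟨⟨fun M : Matrix (Fin n) (Fin q) ℝ => M i k, fun _ _ => rfl⟩, fun _ _ => rfl⟩
      simpa [Pi.smul_apply, smul_eq_mul] using hsq.smul hc
    simpa [smul_eq_mul] using h0.smul (by norm_num : (0:ℝ) ≤ 1/2)
  -- the second quadratic part is convex
  have key : ∀ (M : Matrix (Fin n) (Fin q) ℝ) (i : Fin n),
      (M * Ω * Mᵀ) i i = ∑ l, ((M * Bᵀ) i l) ^ 2 := by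
    intro M i
    have h1 : M * Ω * Mᵀ = (M * Bᵀ) * (M * Bᵀ)ᵀ := by
      rw [hB', Matrix.transpose_mul, Matrix.transpose_transpose,
        Matrix.mul_assoc, Matrix.mul_assoc, Matrix.mul_assoc]
    rw [h1]
    simp [Matrix.mul_apply, Matrix.transpose_apply, sq, mul_comm]
  have hg2 : ConvexOn ℝ Set.univ
      (fun M : Matrix (Fin n) (Fin q) ℝ => (1 / 2) * ∑ i, (M * Ω * Mᵀ) i i) := by
    have h0 : ConvexOn ℝ Set.univ
        (fun M : Matrix (Fin n) (Fin q) ℝ => ∑ i, ∑ l, ((M * Bᵀ) i l) ^ 2) := by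
      refine convexOn_finset_sum' _ _ fun i _ => ?_
      refine convexOn_finset_sum' _ _ fun l _ => ?_
      refine convexOn_sq_linmap
        ⟨⟨fun M : Matrix (Fin n) (Fin q) ℝ => (M * Bᵀ) i l, ?_⟩, ?_⟩
      · intro x y; simp [Matrix.add_mul]
      · intro c x; simp [Matrix.smul_mul]
    have h0' : ConvexOn ℝ Set.univ
        (fun M : Matrix (Fin n) (Fin q) ℝ => ∑ i, (M * Ω * Mᵀ) i i) := by
      have : (fun M : Matrix (Fin n) (Fin q) ℝ => ∑ i, (M * Ω * Mᵀ) i i)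
          = fun M => ∑ i, ∑ l, ((M * Bᵀ) i l) ^ 2 := by
        funext M; exact Finset.sum_congr rfl fun i _ => key M i
      rw [this]; exact h0
    simpa [smul_eq_mul] using h0'.smul (by norm_num : (0:ℝ) ≤ 1/2)
  exact (hL.sub hg1).sub hg2
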